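/- If a sequence (s_n) of complex numbers is a polynomial in 1/n of degree at most N, i.e. s_n = ∑_{j=0}^{N} a_j / n^j for all n ≥ 1, then its N-th Richardson transform s_n^{(N)} = ∑_{k=0}^{N} s_{n+k} (n+k)^N (-1)^{k+N} / (k! (N-k)!) equals a_0 for every n ≥ 1. -/

import Mathlib

open Finset Function fwdDiff

lemma fwdDiff_pow_aux (n : ℕ) : ∀ d ≤ n, ∀ y : ℕ,
    (fwdDiff 1)^[n] (fun m : ℕ => (m : ℂ) ^ d) y = if d = n then (n.factorial : ℂ) else 0 := by
  induction n with
  | zero =>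
    intro d hd y
    interval_cases d
    simp
  | succ n IH =>
    intro d hd y
    have hΔ : fwdDiff 1 (fun m : ℕ => (m : ℂ) ^ d)
        = ∑ i ∈ range d, (fun m : ℕ => (d.choose i : ℂ) * (m : ℂ) ^ i) := by
      funext z
      have hb : ((z : ℂ) + 1) ^ d = ∑ i ∈ range (d + 1), (z : ℂ) ^ i * (d.choose i : ℂ) := by
        rw [add_pow]; simp
      simp only [fwdDiff, Finset.sum_apply]
      push_cast
      rw [hb, Finset.sum_range_succ]
      simp [mul_comm]
    rw [Function.iterate_succ_apply, hΔ, fwdDiff_iter_finset_sum]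
    have hsmul : ∀ i ∈ range d,
        (fwdDiff 1)^[n] (fun m : ℕ => (d.choose i : ℂ) * (m : ℂ) ^ i) y
          = (d.choose i : ℂ) * (if i = n then (n.factorial : ℂ) else 0) := by
      intro i hi
      have hle : i ≤ n := by
        have := Finset.mem_range.mp hi
        omega
      have : (fun m : ℕ => (d.choose i : ℂ) * (m : ℂ) ^ i)
          = (d.choose i : ℂ) • (fun m : ℕ => (m : ℂ) ^ i) := by
        funext z; simp [smul_eq_mul]
      rw [this, fwdDiff_iter_const_smul, Pi.smul_apply, smul_eq_mul, IH i hle]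
    rw [Finset.sum_apply, Finset.sum_congr rfl hsmul]
    simp only [mul_ite, mul_zero]
    rw [Finset.sum_ite_eq' (range d) n (fun i => (d.choose i : ℂ) * (n.factorial : ℂ))]
    rcases eq_or_lt_of_le hd with hdd | hdd
    · have hnd : n ∈ range d := by rw [Finset.mem_range]; omega
      rw [if_pos hnd, if_pos hdd]
      have : d.choose n = n + 1 := by subst hdd; simp [Nat.choose_succ_self_right]
      rw [this, Nat.factorial_succ]
      push_cast
      ring
    · have hnd : n ∉ range d := by rw [Finset.mem_range]; omega
      rw [if_neg hnd, if_neg (by omega)]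

theorem stmt_7 (N : ℕ) (s : ℕ → ℂ) (a : ℕ → ℂ)
    (h : ∀ n : ℕ, 1 ≤ n → s n = ∑ j ∈ Finset.range (N + 1), a j / (n : ℂ) ^ j) :
    ∀ n : ℕ, 1 ≤ n →
      ∑ k ∈ Finset.range (N + 1),
        s (n + k) * ((n : ℂ) + (k : ℂ)) ^ N * (-1) ^ (k + N)
          / ((Nat.factorial k : ℂ) * (Nat.factorial (N - k) : ℂ)) = a 0 := by
  intro n hn
  set g : ℕ → ℂ := fun m => ∑ j ∈ Finset.range (N + 1), a j * (m : ℂ) ^ (N - j) with hg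
  -- the key finite-difference computation
  have hgdiff : (fwdDiff 1)^[N] g n = (N.factorial : ℂ) * a 0 := by
    have : g = ∑ j ∈ Finset.range (N + 1), (fun m : ℕ => a j * (m : ℂ) ^ (N - j)) := by
      funext z; simp [hg, Finset.sum_apply]
    rw [this, fwdDiff_iter_finset_sum, Finset.sum_apply]
    have hterm : ∀ j ∈ Finset.range (N + 1),
        (fwdDiff 1)^[N] (fun m : ℕ => a j * (m : ℂ) ^ (N - j)) n
          = a j * (if N - j = N ∧ j ≤ N then (N.factorial : ℂ) else 0) := by
      intro j hj
      have hjN : j ≤ N := by have := Finset.mem_range.mp hj; omega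
      have : (fun m : ℕ => a j * (m : ℂ) ^ (N - j))
          = a j • (fun m : ℕ => (m : ℂ) ^ (N - j)) := by
        funext z; simp [smul_eq_mul]
      rw [this, fwdDiff_iter_const_smul, Pi.smul_apply, smul_eq_mul,
        fwdDiff_pow_aux N (N - j) (Nat.sub_le N j) n]
      simp [hjN]
    rw [Finset.sum_congr rfl hterm]
    have hcond : ∀ j ∈ Finset.range (N + 1),
        a j * (if N - j = N ∧ j ≤ N then (N.factorial : ℂ) else 0)
          = if j = 0 then a j * (N.factorial : ℂ) else 0 := by
      intro j hj
      have hjN := Finset.mem_range.mp hj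
      by_cases h0 : j = 0
      · subst h0; simp
      · rw [if_neg h0, if_neg (by omega), mul_zero]
    rw [Finset.sum_congr rfl hcond,
      Finset.sum_ite_eq' (Finset.range (N + 1)) 0 (fun j => a j * (N.factorial : ℂ))]
    rw [if_pos (by simp)]
    ring
  -- rewrite the sum as the fwdDiff formula
  have hshift := fwdDiff_iter_eq_sum_shift (1 : ℕ) g N n
  have hcongr : ∀ k ∈ Finset.range (N + 1),
      s (n + k) * ((n : ℂ) + (k : ℂ)) ^ N * (-1) ^ (k + N)
          / ((Nat.factorial k : ℂ) * (Nat.factorial (N - k) : ℂ))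
        = (((-1 : ℤ) ^ (N - k) * N.choose k) • g (n + k • 1)) / (N.factorial : ℂ) := by
    intro k hk
    have hkN : k ≤ N := by have := Finset.mem_range.mp hk; omega
    have hx : (1 : ℕ) ≤ n + k := le_trans hn (Nat.le_add_right n k)
    have hxne : ((n + k : ℕ) : ℂ) ≠ 0 := Nat.cast_ne_zero.mpr (by omega)
    have h1 : s (n + k) * ((n : ℂ) + (k : ℂ)) ^ N = g (n + k) := by
      rw [h (n + k) hx, hg]
      push_cast
      rw [Finset.sum_mul]
      refine Finset.sum_congr rfl fun j hj => ?_
      have hjN : j ≤ N := by have := Finset.mem_range.mp hj; omega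
      have hxne' : ((n : ℂ) + (k : ℂ)) ≠ 0 := by push_cast at hxne; exact hxne
      rw [div_mul_eq_mul_div, mul_div_assoc, pow_sub₀ _ hxne' hjN]
      ring
    have h2 : ((-1 : ℂ)) ^ (k + N) = (-1) ^ (N - k) := by
      have : k + N = N - k + 2 * k := by omega
      rw [this, pow_add, pow_mul, neg_one_sq, one_pow, mul_one]
    have hfact : (N.factorial : ℂ) = (N.choose k : ℂ) * (k.factorial : ℂ) * ((N - k).factorial : ℂ) := by
      exact_mod_cast (Nat.choose_mul_factorial_mul_factorial hkN).symm
    have hCne : (N.choose k : ℂ) ≠ 0 := by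
      exact_mod_cast Nat.cast_ne_zero.mpr (Nat.choose_pos hkN).ne'
    have hkfne : (k.factorial : ℂ) ≠ 0 := by
      exact_mod_cast Nat.cast_ne_zero.mpr k.factorial_ne_zero
    have hNkfne : ((N - k).factorial : ℂ) ≠ 0 := by
      exact_mod_cast Nat.cast_ne_zero.mpr (N - k).factorial_ne_zero
    have hsm : (((-1 : ℤ) ^ (N - k) * N.choose k) • g (n + k • 1))
        = ((-1 : ℂ) ^ (N - k) * (N.choose k : ℂ)) * g (n + k) := by
      have hk1 : k • (1 : ℕ) = k := by simp
      rw [hk1, zsmul_eq_mul]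
      push_cast
      ring
    rw [hsm, h1, h2, hfact]
    field_simp
  rw [Finset.sum_congr rfl hcongr, ← Finset.sum_div, ← hshift, hgdiff]
  have hNfne : (N.factorial : ℂ) ≠ 0 := by
    exact_mod_cast Nat.cast_ne_zero.mpr N.factorial_ne_zero
  field_simp
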